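/- For all natural numbers n ≥ 1 and k ≥ 1, the sum over all partitions P of n having at most k parts of the quantity C(k, l) · l! / (∏_{v} (m_v)!) equals C(k+n−1, n), where l is the number of parts of P, the product ranges over the distinct part-values v of P, m_v is the multiplicity of the value v among the parts of P, and C(·,·) denotes the binomial coefficient. -/

import Mathlib

open Nat Finset

section CountLemma

variable {β : Type*} [DecidableEq β]

noncomputable instance fintypeFunMultiset (α : Type*) [Fintype α] [DecidableEq α]
    (M : Multiset β) : Fintype {f : α → β // Multiset.map f Finset.univ.val = M} :=
  Fintype.ofInjective
    (fun f => (fun x => (⟨f.1 x, by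
      have h2 : f.1 x ∈ Multiset.map f.1 Finset.univ.val :=
        Multiset.mem_map_of_mem _ (Finset.mem_univ_val x)
      rw [f.2] at h2
      exact Multiset.mem_toFinset.mpr h2⟩ :
        {b // b ∈ M.toFinset})))
    (fun f g h => Subtype.ext (funext fun x => congrArg Subtype.val (congrFun h x)))

theorem card_fun_multiset :
    ∀ (N : ℕ) (α : Type) [Fintype α] [DecidableEq α] (M : Multiset β),
      Multiset.card M = N → Fintype.card α = N →
      Fintype.card {f : α → β // Multiset.map f Finset.univ.val = M} = M.countPerms := by
  intro N
  induction N using Nat.strong_induction_on with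
  | _ N ih =>
    intro α _ _ M hM hα
    rcases Nat.eq_zero_or_pos N with h0 | hpos
    · subst h0
      have hM0 : M = 0 := Multiset.card_eq_zero.mp hM
      subst hM0
      have hie : IsEmpty α := Fintype.card_eq_zero_iff.mp hα
      have huniv : (Finset.univ : Finset α).val = 0 := by
        have : (Finset.univ : Finset α) = ∅ := Finset.card_eq_zero.mp hα
        simp [this]
      haveI : Unique {f : α → β // Multiset.map f Finset.univ.val = (0 : Multiset β)} :=
        { default := ⟨fun x => isEmptyElim x, by simp [huniv]⟩
          uniq := fun f => Subtype.ext (funext fun x => isEmptyElim x) }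
      rw [Fintype.card_unique, Multiset.countPerms_zero]
    · have hMne : M ≠ 0 := by
        intro h; rw [h] at hM; simp at hM; omega
      obtain ⟨a, ha⟩ := Multiset.exists_mem_of_ne_zero hMne
      set m := M.count a with hm
      set M' := M.filter (a ≠ ·) with hM'
      have hmpos : 1 ≤ m := Multiset.one_le_count_iff_mem.mpr ha
      have hmle : m ≤ N := hM ▸ Multiset.count_le_card a M
      have hMsplit : Multiset.replicate m a + M' = M := by
        rw [hM', hm]
        have h1 := Multiset.filter_add_not (fun b => a = b) M
        have h2 : M.filter (fun b => a = b) = Multiset.replicate (M.count a) a :=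
          Multiset.filter_eq M a
        have h3 : M.filter (fun b => ¬ a = b) = M.filter (a ≠ ·) := rfl
        rw [h2, h3] at h1
        exact h1
      have hcardM' : Multiset.card M' = N - m := by
        have := congrArg Multiset.card hMsplit
        rw [Multiset.card_add, Multiset.card_replicate, hM] at this
        omega
      have hcardfilter : ∀ (f : α → β), Multiset.map f Finset.univ.val = M →
          (Finset.univ.filter (fun x => f x = a)).card = m := by
        intro f hf
        have h1 := congrArg (Multiset.count a) hf
        rw [Multiset.count_map] at h1
        rw [hm, ← h1, Finset.card_def, Finset.filter_val]
        exact congrArg Multiset.card (Multiset.filter_congr (fun x _ => eq_comm))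
      set phi : {f : α → β // Multiset.map f Finset.univ.val = M} → {S : Finset α // S.card = m} :=
        fun f => ⟨Finset.univ.filter (fun x => f.1 x = a), hcardfilter f.1 f.2⟩ with hphi
      have key : Fintype.card {f : α → β // Multiset.map f Finset.univ.val = M}
          = ∑ S : {S : Finset α // S.card = m},
              Fintype.card {f : {f : α → β // Multiset.map f Finset.univ.val = M} // phi f = S} := by
        rw [← Fintype.card_sigma]
        exact (Fintype.card_congr (Equiv.sigmaFiberEquiv phi)).symm
      have fib : ∀ S : {S : Finset α // S.card = m},
          Fintype.card {f : {f : α → β // Multiset.map f Finset.univ.val = M} // phi f = S}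
            = M'.countPerms := by
        intro S
        have hconn : ∀ (f : α → β), Multiset.map f Finset.univ.val = M →
            Finset.univ.filter (fun x => f x = a) = S.1 →
            Multiset.map (fun x : {x : α // x ∉ S.1} => f x.1) Finset.univ.val = M' := by
          intro f hf hS
          have h1 : Multiset.map (fun x : {x : α // x ∉ S.1} => f x.1) Finset.univ.val
              = Multiset.map f ((Finset.univ.filter (fun x => x ∉ S.1)).val) := by
            rw [← Finset.univ_val_map_subtype_val (fun x => x ∉ S.1), Multiset.map_map]
            rfl
          rw [h1, ← hS]
          have h2 : Finset.univ.filter (fun x => x ∉ Finset.univ.filter (fun x => f x = a))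
              = Finset.univ.filter (fun x => ¬ (f x = a)) := by
            apply Finset.filter_congr
            intro x _
            simp
          rw [h2, Finset.filter_val, hM', ← hf, Multiset.filter_map]
          congr 1
          exact Multiset.filter_congr (fun x _ => ne_comm)
        let e : {f : {f : α → β // Multiset.map f Finset.univ.val = M} // phi f = S}
            ≃ {g : {x : α // x ∉ S.1} → β // Multiset.map g Finset.univ.val = M'} :=
          { toFun := fun f => ⟨fun x => f.1.1 x.1,
              hconn f.1.1 f.1.2 (congrArg Subtype.val f.2)⟩
            invFun := fun g =>
              ⟨⟨fun x => if h : x ∈ S.1 then a else g.1 ⟨x, h⟩, by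
                have hsplit := Multiset.filter_add_not (fun x => x ∈ S.1) Finset.univ.val
                conv_lhs => rw [← hsplit]
                rw [Multiset.map_add]
                have hpart1 : Multiset.map (fun x => if h : x ∈ S.1 then a else g.1 ⟨x, h⟩)
                    (Finset.univ.val.filter (fun x => x ∈ S.1))
                    = Multiset.replicate m a := by
                  have hSv : Multiset.filter (fun x => x ∈ S.1) Finset.univ.val = S.1.val := by
                    rw [← Finset.filter_val]
                    congr 1
                    ext x
                    simp
                  rw [hSv]
                  have hc : Multiset.map (fun x => if h : x ∈ S.1 then a else g.1 ⟨x, h⟩) S.1.val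
                      = Multiset.map (fun _ => a) S.1.val :=
                    Multiset.map_congr rfl (fun x hx => dif_pos hx)
                  rw [hc, Multiset.map_const']
                  have hSc : Multiset.card (S.1).val = m := S.2
                  rw [hSc]
                have hpart2 : Multiset.map (fun x => if h : x ∈ S.1 then a else g.1 ⟨x, h⟩)
                    (Finset.univ.val.filter (fun x => ¬ x ∈ S.1))
                    = M' := by
                  rw [← Finset.filter_val,
                    ← Finset.univ_val_map_subtype_val (fun x => ¬ x ∈ S.1),
                    Multiset.map_map]
                  have hc : Multiset.map ((fun x => if h : x ∈ S.1 then a else g.1 ⟨x, h⟩) ∘ Subtype.val)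
                      (Finset.univ : Finset {x : α // ¬ x ∈ S.1}).val
                      = Multiset.map g.1 (Finset.univ : Finset {x : α // ¬ x ∈ S.1}).val :=
                    Multiset.map_congr rfl (fun x _ => by
                      show (if h : (x : α) ∈ S.1 then a else g.1 ⟨x, h⟩) = g.1 x
                      rw [dif_neg x.2])
                  rw [hc]
                  exact g.2
                rw [hpart1, hpart2, hMsplit]⟩, by
                apply Subtype.ext
                show Finset.univ.filter _ = S.1
                ext x
                simp only [Finset.mem_filter, Finset.mem_univ, true_and]
                constructor
                · intro hx
                  by_contra hxS
                  rw [dif_neg hxS] at hx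
                  have hmem : g.1 ⟨x, hxS⟩ ∈ M' := by
                    have h9 : g.1 ⟨x, hxS⟩ ∈ Multiset.map g.1 Finset.univ.val :=
                      Multiset.mem_map_of_mem _ (Finset.mem_univ_val _)
                    rw [g.2] at h9
                    exact h9
                  exact Multiset.of_mem_filter hmem hx.symm
                · intro hx
                  rw [dif_pos hx]⟩
            left_inv := by
              intro f
              apply Subtype.ext
              apply Subtype.ext
              funext x
              show (if h : x ∈ S.1 then a else f.1.1 x) = f.1.1 x
              split_ifs with h
              · have h2 := congrArg Subtype.val f.2
                rw [← h2] at h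
                exact ((Finset.mem_filter.mp h).2).symm
              · rfl
            right_inv := by
              intro g
              apply Subtype.ext
              funext x
              show (if h : (x : α) ∈ S.1 then a else g.1 ⟨x, h⟩) = g.1 x
              rw [dif_neg x.2] }
        rw [Fintype.card_congr e]
        have hcard_sub : Fintype.card {x : α // x ∉ S.1} = N - m := by
          have hc : Fintype.card {x : α // x ∈ S.1} = m := by
            rw [Fintype.card_coe]
            exact S.2
          rw [Fintype.card_subtype_compl, hα, hc]
        exact ih (N - m) (by omega) _ M' hcardM' hcard_sub
      rw [key]
      rw [Finset.sum_congr rfl (fun S _ => fib S)]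
      rw [Finset.sum_const, Finset.card_univ, Fintype.card_finset_len, hα, smul_eq_mul]
      rw [Multiset.countPerms_filter_ne a M]
      rw [hM, ← hm, ← hM']

end CountLemma

section Fiber

variable {k : ℕ}

theorem map_count_univ_val (m : Multiset (Fin k)) :
    Multiset.map m.count Finset.univ.val
      = m.dedup.map m.count + Multiset.replicate (k - Multiset.card m.dedup) 0 := by
  have hle : m.dedup ≤ (Finset.univ : Finset (Fin k)).val := by
    rw [← Multiset.toFinset_val]
    exact Finset.val_le_iff.mpr (Finset.subset_univ _)
  have hsplit : (Finset.univ : Finset (Fin k)).val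
      = m.dedup + ((Finset.univ : Finset (Fin k)).val - m.dedup) :=
    (add_tsub_cancel_of_le hle).symm
  conv_lhs => rw [hsplit]
  rw [Multiset.map_add]
  congr 1
  apply Multiset.eq_replicate.mpr
  constructor
  · rw [Multiset.card_map, Multiset.card_sub hle]
    congr 1
    show (Finset.univ : Finset (Fin k)).card = k
    simp
  · intro b hb
    obtain ⟨x, hx, rfl⟩ := Multiset.mem_map.mp hb
    have h1 : 0 < Multiset.count x ((Finset.univ : Finset (Fin k)).val - m.dedup) :=
      Multiset.count_pos.mpr hx
    rw [Multiset.count_sub] at h1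
    have h2 : Multiset.count x (Finset.univ : Finset (Fin k)).val = 1 :=
      Multiset.count_eq_one_of_mem (Finset.univ.nodup) (Finset.mem_univ_val x)
    have h3 : Multiset.count x m.dedup = 0 := by omega
    have h4 : x ∉ m := by
      intro hxm
      rw [Multiset.count_eq_zero] at h3
      exact h3 (Multiset.mem_dedup.mpr hxm)
    exact Multiset.count_eq_zero_of_notMem h4

theorem card_eq_sum_counts (m : Multiset (Fin k)) :
    Multiset.card m = ∑ i : Fin k, m.count i := by
  rw [← Multiset.toFinset_sum_count_eq]
  exact Finset.sum_subset (Finset.subset_univ _)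
    (fun x _ hx => Multiset.count_eq_zero_of_notMem
      (fun h => hx (Multiset.mem_toFinset.mpr h)))

theorem ofSym_parts {n : ℕ} (s : Sym (Fin k) n) :
    (Nat.Partition.ofSym s).parts = s.1.dedup.map s.1.count := rfl

noncomputable def fiberEquiv (n : ℕ) (μ : Nat.Partition n) :
    {s : Sym (Fin k) n // Nat.Partition.ofSym s = μ} ≃
      {f : Fin k → ℕ // Multiset.map f Finset.univ.val
        = μ.parts + Multiset.replicate (k - Multiset.card μ.parts) 0} where
  toFun := fun s => ⟨s.1.1.count, by
    have hdef : s.1.1.dedup.map s.1.1.count = μ.parts := by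
      rw [← ofSym_parts, s.2]
    rw [map_count_univ_val, hdef]
    congr 2
    rw [← hdef, Multiset.card_map]⟩
  invFun := fun f => by
    refine ⟨⟨(Finsupp.equivFunOnFinite.symm f.1).toMultiset, ?_⟩, ?_⟩
    · -- card = n
      have hcount : ∀ i, ((Finsupp.equivFunOnFinite.symm f.1).toMultiset).count i = f.1 i := by
        intro i
        rw [Finsupp.count_toMultiset]
        rfl
      rw [card_eq_sum_counts]
      have h1 : ∑ i : Fin k, ((Finsupp.equivFunOnFinite.symm f.1).toMultiset).count i
          = ∑ i : Fin k, f.1 i := Finset.sum_congr rfl (fun i _ => hcount i)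
      rw [h1]
      have h2 : ∑ i : Fin k, f.1 i = Multiset.sum (Multiset.map f.1 Finset.univ.val) := rfl
      rw [h2, f.2, Multiset.sum_add, Multiset.sum_replicate, smul_zero, add_zero, μ.parts_sum]
    · -- ofSym = μ
      apply Nat.Partition.ext
      set ms := (Finsupp.equivFunOnFinite.symm f.1).toMultiset with hms
      have hcount : ms.count = f.1 := by
        funext i
        rw [hms, Finsupp.count_toMultiset]
        rfl
      have h1 := map_count_univ_val ms
      rw [hcount, f.2] at h1
      have h2 := congrArg (Multiset.filter (fun v => v ≠ 0)) h1
      rw [Multiset.filter_add, Multiset.filter_add] at h2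
      have hrep : ∀ j, Multiset.filter (fun v => v ≠ 0) (Multiset.replicate j (0:ℕ)) = 0 := by
        intro j
        apply Multiset.filter_eq_nil.mpr
        intro b hb
        rw [Multiset.eq_of_mem_replicate hb]
        simp
      have hparts : Multiset.filter (fun v => v ≠ 0) μ.parts = μ.parts :=
        Multiset.filter_eq_self.mpr (fun b hb => (μ.parts_pos hb).ne')
      have hded : Multiset.filter (fun v => v ≠ 0) (Multiset.map f.1 ms.dedup)
          = Multiset.map f.1 ms.dedup := by
        apply Multiset.filter_eq_self.mpr
        intro b hb
        obtain ⟨x, hx, rfl⟩ := Multiset.mem_map.mp hb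
        rw [← hcount]
        exact (Multiset.count_pos.mpr (Multiset.mem_dedup.mp hx)).ne'
      rw [hrep, hrep, hparts, hded, add_zero, add_zero] at h2
      show Multiset.map ms.count ms.dedup = μ.parts
      rw [hcount]
      exact h2.symm
  left_inv := by
    intro s
    apply Subtype.ext
    apply Subtype.ext
    apply Multiset.ext.mpr
    intro i
    rw [Finsupp.count_toMultiset]
    rfl
  right_inv := by
    intro f
    apply Subtype.ext
    funext i
    show Multiset.count i (Finsupp.equivFunOnFinite.symm f.1).toMultiset = f.1 i
    rw [Finsupp.count_toMultiset]
    rfl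

theorem dedup_le_univ_val (m : Multiset (Fin k)) :
    m.dedup ≤ (Finset.univ : Finset (Fin k)).val := by
  rw [← Multiset.toFinset_val]
  exact Finset.val_le_iff.mpr (Finset.subset_univ _)

theorem fiber_card (n : ℕ) (μ : Nat.Partition n)
    (hk : Multiset.card μ.parts ≤ k) :
    Fintype.card {s : Sym (Fin k) n // Nat.Partition.ofSym s = μ}
      = Nat.choose k (Multiset.card μ.parts) *
          ((Multiset.card μ.parts)! / ∏ v ∈ μ.parts.toFinset, (μ.parts.count v)!) := by
  classical
  have h0parts : (0:ℕ) ∉ μ.parts := fun h => (Nat.lt_irrefl 0 (μ.parts_pos h))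
  rw [Fintype.card_congr (fiberEquiv n μ)]
  rw [card_fun_multiset k (Fin k) _
    (by rw [Multiset.card_add, Multiset.card_replicate]; omega)
    (Fintype.card_fin k)]
  rw [Multiset.countPerms_filter_ne 0]
  have hcount0 : (μ.parts + Multiset.replicate (k - Multiset.card μ.parts) 0).count 0
      = k - Multiset.card μ.parts := by
    rw [Multiset.count_add, Multiset.count_eq_zero_of_notMem h0parts,
      Multiset.count_replicate_self, zero_add]
  have hfilter : (μ.parts
        + Multiset.replicate (k - Multiset.card μ.parts) 0).filter ((0:ℕ) ≠ ·)
      = μ.parts := by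
    rw [Multiset.filter_add]
    have h1 : μ.parts.filter ((0:ℕ) ≠ ·) = μ.parts :=
      Multiset.filter_eq_self.mpr (fun b hb => (μ.parts_pos hb).ne)
    have h2 : (Multiset.replicate (k - Multiset.card μ.parts) (0:ℕ)).filter ((0:ℕ) ≠ ·)
        = 0 := by
      apply Multiset.filter_eq_nil.mpr
      intro b hb
      rw [Multiset.eq_of_mem_replicate hb]
      simp
    rw [h1, h2, add_zero]
  have hcardM : Multiset.card (μ.parts
      + Multiset.replicate (k - Multiset.card μ.parts) (0:ℕ)) = k := by
    rw [Multiset.card_add, Multiset.card_replicate]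
    omega
  rw [hcount0, hfilter, hcardM, Nat.choose_symm hk]
  congr 1
  have hsum : ∑ v ∈ μ.parts.toFinset, μ.parts.count v = Multiset.card μ.parts :=
    Multiset.toFinset_sum_count_eq μ.parts
  have hspec := Nat.multinomial_spec μ.parts.toFinset μ.parts.count
  rw [hsum] at hspec
  have hmm : μ.parts.countPerms = Nat.multinomial μ.parts.toFinset μ.parts.count := by
    rw [Multiset.countPerms, Finsupp.multinomial_eq, Multiset.toFinsupp_support]
    exact Nat.multinomial_congr (fun a _ => Multiset.toFinsupp_apply _ _)
  rw [hmm]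
  exact (Nat.div_eq_of_eq_mul_right
    (Finset.prod_pos (fun i _ => Nat.factorial_pos _)) hspec.symm).symm

theorem fiber_empty (n : ℕ) (μ : Nat.Partition n)
    (hk : ¬ Multiset.card μ.parts ≤ k) :
    Fintype.card {s : Sym (Fin k) n // Nat.Partition.ofSym s = μ} = 0 := by
  classical
  rw [Fintype.card_eq_zero_iff]
  constructor
  intro s
  apply hk
  have hparts : μ.parts = s.1.1.dedup.map s.1.1.count :=
    (congrArg Nat.Partition.parts s.2).symm
  rw [hparts, Multiset.card_map]
  calc Multiset.card s.1.1.dedup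
      ≤ Multiset.card (Finset.univ : Finset (Fin k)).val :=
        Multiset.card_le_card (dedup_le_univ_val s.1.1)
    _ = k := by simp

end Fiber

/-- summing `C(k, l) * l! / ∏_v (m_v)!` over all partitions of
`n` with at most `k` parts (where `l` is the number of parts and `m_v` the
multiplicity of the distinct part-value `v`) gives `C(k+n-1, n)`. -/
theorem sum_over_partitions_eq_choose (n k : ℕ) (hn : 1 ≤ n) (hk : 1 ≤ k) :
    ∑ P ∈ Finset.univ.filter
        (fun P : Nat.Partition n => Multiset.card P.parts ≤ k),
      Nat.choose k (Multiset.card P.parts) *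
        ((Multiset.card P.parts)! / ∏ v ∈ P.parts.toFinset, (P.parts.count v)!)
      = Nat.choose (k + n - 1) n := by
  classical
  have h1 : Nat.choose (k + n - 1) n = Fintype.card (Sym (Fin k) n) := by
    rw [Sym.card_sym_eq_choose, Fintype.card_fin]
  rw [h1]
  rw [← Fintype.card_congr
    (Equiv.sigmaFiberEquiv (fun s : Sym (Fin k) n => Nat.Partition.ofSym s))]
  rw [Fintype.card_sigma]
  have h2 : ∑ μ : Nat.Partition n,
        Fintype.card {s : Sym (Fin k) n // Nat.Partition.ofSym s = μ}
      = ∑ μ ∈ Finset.univ.filter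
          (fun μ : Nat.Partition n => Multiset.card μ.parts ≤ k),
          Fintype.card {s : Sym (Fin k) n // Nat.Partition.ofSym s = μ} :=
    (Finset.sum_subset (Finset.filter_subset _ _)
      (fun μ _ hμ => fiber_empty n μ (by
        intro h
        exact hμ (Finset.mem_filter.mpr ⟨Finset.mem_univ _, h⟩)))).symm
  rw [h2]
  exact (Finset.sum_congr rfl (fun μ hμ =>
    fiber_card n μ (Finset.mem_filter.mp hμ).2)).symm
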